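/- Let V be real-analytic near 0 with V(0) = 0, V'(0) > 0, and for real E near 0 let a(E) be the root of V = E near 0. Define ξ(x) = -( (3/2)∫_x^{a(E)} √(E - V(t)) dt )^{2/3} for x ≤ a(E) and ξ(x) = ( (3/2)∫_{a(E)}^x √(V(t) - E) dt )^{2/3} for x > a(E). Then ξ is differentiable near 0 and satisfies ξ(x)·ξ'(x)² = V(x) - E. -/

import Mathlib

set_option maxHeartbeats 1000000

open MeasureTheory intervalIntegral

private lemma sqrt_pow_integral (n : ℕ) {s : ℝ} (hs : 0 ≤ s) :
    ∫ u in (0:ℝ)..s, Real.sqrt (u ^ n) = 2 / ((n : ℝ) + 2) * Real.sqrt (s ^ (n + 2)) := by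
  have hcont : Continuous fun u : ℝ => Real.sqrt (u ^ n) :=
    Real.continuous_sqrt.comp (continuous_pow n)
  have hF : ContinuousOn (fun u : ℝ => 2 / ((n : ℝ) + 2) * Real.sqrt (u ^ (n + 2)))
      (Set.Icc 0 s) := by fun_prop
  have hderiv : ∀ u ∈ Set.Ioo (0:ℝ) s,
      HasDerivWithinAt (fun u : ℝ => 2 / ((n : ℝ) + 2) * Real.sqrt (u ^ (n + 2)))
        (Real.sqrt (u ^ n)) (Set.Ioi u) u := by
    intro u hu
    have hu0 : 0 < u := hu.1
    have h1 : HasDerivAt (fun u : ℝ => u ^ (n + 2)) (((n : ℝ) + 2) * u ^ (n + 1)) u := by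
      simpa using hasDerivAt_pow (n + 2) u
    have h3 := (h1.sqrt (pow_ne_zero _ hu0.ne')).const_mul (2 / ((n : ℝ) + 2))
    refine HasDerivAt.hasDerivWithinAt ?_
    convert h3 using 1
    · rfl
    have hsq : Real.sqrt (u ^ (n + 2)) = Real.sqrt (u ^ n) * u := by
      rw [pow_add, Real.sqrt_mul (pow_nonneg hu0.le _), Real.sqrt_sq hu0.le]
    have hsn : (0:ℝ) < Real.sqrt (u ^ n) := Real.sqrt_pos.mpr (pow_pos hu0 _)
    have hn2 : ((n : ℝ) + 2) ≠ 0 := by positivity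
    rw [hsq, pow_succ]
    have key : Real.sqrt (u ^ n) * Real.sqrt (u ^ n) = u ^ n :=
      Real.mul_self_sqrt (pow_nonneg hu0.le n)
    field_simp
    linear_combination key
  have := intervalIntegral.integral_eq_sub_of_hasDeriv_right_of_le hs hF hderiv
    (hcont.intervalIntegrable _ _)
  rw [this]
  simp

private lemma xi_diff_at_a (V : ℝ → ℝ) (E a δ : ℝ) (hδ : 0 < δ)
    (hV : ∀ x ∈ Set.Ioo (-δ) δ, AnalyticAt ℝ V x)
    (ha : a ∈ Set.Ioo (-δ) δ) (haE : V a = E)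
    (hleft : ∀ t ∈ Set.Ioo (-δ) δ, t < a → V t < E)
    (hright : ∀ t ∈ Set.Ioo (-δ) δ, a < t → E < V t) :
    DifferentiableAt ℝ (fun x : ℝ =>
      if x ≤ a then -((3 / 2 * ∫ t in x..a, Real.sqrt (E - V t)) ^ ((2 : ℝ) / 3))
      else (3 / 2 * ∫ t in a..x, Real.sqrt (V t - E)) ^ ((2 : ℝ) / 3)) a := by
  set Φ : ℝ → ℝ := fun x : ℝ =>
      if x ≤ a then -((3 / 2 * ∫ t in x..a, Real.sqrt (E - V t)) ^ ((2 : ℝ) / 3))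
      else (3 / 2 * ∫ t in a..x, Real.sqrt (V t - E)) ^ ((2 : ℝ) / 3) with hΦdef
  have hΦa : Φ a = 0 := by
    rw [hΦdef]
    show (if a ≤ a then _ else _) = (0:ℝ)
    rw [if_pos le_rfl, intervalIntegral.integral_same, mul_zero,
      Real.zero_rpow (by norm_num), neg_zero]
  have hIooEv : ∀ᶠ z in nhds a, z ∈ Set.Ioo (-δ) δ := by
    filter_upwards [isOpen_Ioo.mem_nhds ha] with z hz using hz
  have hWa : AnalyticAt ℝ (fun t => V t - E) a := (hV a ha).sub analyticAt_const
  have hnot : ¬ ∀ᶠ z in nhds a, V z - E = 0 := by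
    intro hcontra
    have hev : ∀ᶠ z in nhdsWithin a (Set.Ioi a), False := by
      filter_upwards [hcontra.filter_mono nhdsWithin_le_nhds,
        hIooEv.filter_mono nhdsWithin_le_nhds, self_mem_nhdsWithin] with z h1 h2 h3
      have := hright z h2 h3
      linarith
    obtain ⟨_, hz⟩ := hev.exists
    exact hz
  have hne : analyticOrderAt (fun t => V t - E) a ≠ ⊤ := fun h => hnot (analyticOrderAt_eq_top.mp h)
  obtain ⟨n, hn⟩ := WithTop.ne_top_iff_exists.mp hne
  obtain ⟨g, hg, hg0, hfg⟩ := (hWa.analyticOrderAt_eq_natCast (n := n)).mp hn.symm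
  simp only [smul_eq_mul] at hfg
  have hgc : ContinuousAt g a := hg.continuousAt
  have hgapos : 0 < g a := by
    rcases lt_or_gt_of_ne hg0 with hlt | hgt
    · exfalso
      have hev : ∀ᶠ z in nhdsWithin a (Set.Ioi a), False := by
        filter_upwards [hfg.filter_mono nhdsWithin_le_nhds,
          (hgc.eventually_lt_const hlt).filter_mono nhdsWithin_le_nhds,
          hIooEv.filter_mono nhdsWithin_le_nhds, self_mem_nhdsWithin] with z h1 h2 h3 h4
        have hzpow : 0 < (z - a) ^ n := pow_pos (sub_pos.mpr h4) n
        have hneg : V z - E < 0 := by rw [h1]; exact mul_neg_of_pos_of_neg hzpow h2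
        have := hright z h3 h4
        linarith
      obtain ⟨_, hz⟩ := hev.exists
      exact hz
    · exact hgt
  have hodd : Odd n := by
    rcases Nat.even_or_odd n with he | ho
    · exfalso
      have hev : ∀ᶠ z in nhdsWithin a (Set.Iio a), False := by
        filter_upwards [hfg.filter_mono nhdsWithin_le_nhds,
          (hgc.eventually_const_lt hgapos).filter_mono nhdsWithin_le_nhds,
          hIooEv.filter_mono nhdsWithin_le_nhds, self_mem_nhdsWithin] with z h1 h2 h3 h4
        have hzpow : 0 < (z - a) ^ n := he.pow_pos (sub_ne_zero.mpr (ne_of_lt h4))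
        have hpos : 0 < V z - E := by rw [h1]; exact mul_pos hzpow h2
        have := hleft z h3 h4
        linarith
      obtain ⟨_, hz⟩ := hev.exists
      exact hz
    · exact ho
  set c := g a with hcdef
  -- rpow helper identities
  have hpow : ∀ s : ℝ, 0 < s → ∀ K : ℝ, 0 ≤ K →
      (K * Real.sqrt (s ^ (n + 2))) ^ ((2:ℝ)/3) = K ^ ((2:ℝ)/3) * s ^ (((n:ℝ)+2)/3) := by
    intro s hs K hK
    rw [Real.mul_rpow hK (Real.sqrt_nonneg _)]
    congr 1
    rw [Real.sqrt_eq_rpow, ← Real.rpow_natCast s (n+2), ← Real.rpow_mul hs.le,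
      ← Real.rpow_mul hs.le]
    congr 1
    push_cast
    ring
  have hdiv : ∀ s : ℝ, 0 < s → s ^ (((n:ℝ)+2)/3) / s = s ^ (((n:ℝ)+2)/3 - 1) := by
    intro s hs
    rw [Real.rpow_sub hs, Real.rpow_one]
  have hn2 : ((n:ℝ) + 2) ≠ 0 := by positivity
  -- main quantitative bound
  have key : ∀ ε : ℝ, 0 < ε → ε < c → ∃ r > 0, ∀ z : ℝ, z ≠ a → |z - a| < r →
      (3 / ((n:ℝ) + 2) * Real.sqrt (c - ε)) ^ ((2:ℝ)/3) * |z - a| ^ (((n:ℝ) + 2)/3 - 1)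
        ≤ slope Φ a z ∧
      slope Φ a z
        ≤ (3 / ((n:ℝ) + 2) * Real.sqrt (c + ε)) ^ ((2:ℝ)/3) * |z - a| ^ (((n:ℝ) + 2)/3 - 1) := by
    intro ε hε hεc
    have hev : ∀ᶠ t in nhds a, (V t - E = (t - a) ^ n * g t) ∧ ((c - ε < g t ∧ g t < c + ε)
        ∧ t ∈ Set.Ioo (-δ) δ) :=
      hfg.and (((hgc.eventually_const_lt (by linarith)).and
        (hgc.eventually_lt_const (by linarith))).and hIooEv)
    obtain ⟨r, hr, hP⟩ := Metric.eventually_nhds_iff.mp hev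
    refine ⟨r, hr, ?_⟩
    have tail : ∀ z s Iv : ℝ, 0 < s → |z - a| = s →
        slope Φ a z = (3/2 * Iv) ^ ((2:ℝ)/3) / s →
        3/((n:ℝ)+2) * Real.sqrt (c-ε) * Real.sqrt (s^(n+2)) ≤ 3/2 * Iv →
        3/2 * Iv ≤ 3/((n:ℝ)+2) * Real.sqrt (c+ε) * Real.sqrt (s^(n+2)) →
        (3/((n:ℝ)+2) * Real.sqrt (c-ε)) ^ ((2:ℝ)/3) * |z-a| ^ (((n:ℝ)+2)/3 - 1) ≤ slope Φ a z ∧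
        slope Φ a z ≤ (3/((n:ℝ)+2) * Real.sqrt (c+ε)) ^ ((2:ℝ)/3) * |z-a| ^ (((n:ℝ)+2)/3 - 1) := by
      intro z s Iv hs habs hslope hlb hub
      have hL0 : (0:ℝ) ≤ 3/((n:ℝ)+2) * Real.sqrt (c-ε) := by positivity
      have hU0 : (0:ℝ) ≤ 3/((n:ℝ)+2) * Real.sqrt (c+ε) := by positivity
      have hT0 : (0:ℝ) ≤ 3/2 * Iv := le_trans (by positivity) hlb
      have h1 := Real.rpow_le_rpow (by positivity) hlb (by norm_num : (0:ℝ) ≤ 2/3)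
      have h2 := Real.rpow_le_rpow hT0 hub (by norm_num : (0:ℝ) ≤ 2/3)
      rw [habs, hslope]
      constructor
      · calc (3/((n:ℝ)+2) * Real.sqrt (c-ε)) ^ ((2:ℝ)/3) * s ^ (((n:ℝ)+2)/3 - 1)
            = (3/((n:ℝ)+2) * Real.sqrt (c-ε) * Real.sqrt (s^(n+2))) ^ ((2:ℝ)/3) / s := by
              rw [hpow s hs _ hL0, ← hdiv s hs, mul_div_assoc]
          _ ≤ (3/2 * Iv) ^ ((2:ℝ)/3) / s := by gcongr
      · calc (3/2 * Iv) ^ ((2:ℝ)/3) / s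
            ≤ (3/((n:ℝ)+2) * Real.sqrt (c+ε) * Real.sqrt (s^(n+2))) ^ ((2:ℝ)/3) / s := by gcongr
          _ = (3/((n:ℝ)+2) * Real.sqrt (c+ε)) ^ ((2:ℝ)/3) * s ^ (((n:ℝ)+2)/3 - 1) := by
              rw [hpow s hs _ hU0, ← hdiv s hs, mul_div_assoc]
    intro z hza hzr
    rcases lt_or_gt_of_ne hza with hzlt | hzgt
    · -- z < a
      set s := a - z with hsdef
      have hs : 0 < s := sub_pos.mpr hzlt
      have habs : |z - a| = s := by rw [abs_of_neg (sub_neg.mpr hzlt)]; ring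
      have hPt : ∀ t ∈ Set.Icc z a, (V t - E = (t - a) ^ n * g t) ∧ ((c - ε < g t ∧ g t < c + ε)
          ∧ t ∈ Set.Ioo (-δ) δ) := by
        intro t ht
        apply hP
        rw [Real.dist_eq, abs_of_nonpos (by linarith [ht.2] : t - a ≤ 0)]
        have : a - t ≤ s := by simp only [hsdef]; linarith [ht.1]
        calc -(t - a) = a - t := by ring
          _ ≤ s := this
          _ = |z - a| := habs.symm
          _ < r := hzr
      have hEV : ∀ t ∈ Set.Icc z a, E - V t = (a - t) ^ n * g t := by
        intro t ht
        have h1 := (hPt t ht).1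
        rw [show E - V t = -(V t - E) by ring, h1, show (t - a : ℝ) = -(a - t) by ring,
          hodd.neg_pow]
        ring
      have hlow : ∀ t ∈ Set.Icc z a,
          Real.sqrt (c - ε) * Real.sqrt ((a - t) ^ n) ≤ Real.sqrt (E - V t) := by
        intro t ht
        obtain ⟨h1, ⟨h2, _⟩, _⟩ := hPt t ht
        rw [← Real.sqrt_mul (by linarith : (0:ℝ) ≤ c - ε)]
        apply Real.sqrt_le_sqrt
        rw [hEV t ht]
        nlinarith [pow_nonneg (by linarith [ht.2] : (0:ℝ) ≤ a - t) n]
      have hup : ∀ t ∈ Set.Icc z a,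
          Real.sqrt (E - V t) ≤ Real.sqrt (c + ε) * Real.sqrt ((a - t) ^ n) := by
        intro t ht
        obtain ⟨h1, ⟨_, h2⟩, _⟩ := hPt t ht
        rw [← Real.sqrt_mul (by linarith : (0:ℝ) ≤ c + ε)]
        apply Real.sqrt_le_sqrt
        rw [hEV t ht]
        nlinarith [pow_nonneg (by linarith [ht.2] : (0:ℝ) ≤ a - t) n]
      have hcmid : ContinuousOn (fun t => Real.sqrt (E - V t)) (Set.Icc z a) := by
        intro t ht
        exact (Real.continuous_sqrt.continuousAt.comp
          (continuousAt_const.sub ((hV t (hPt t ht).2.2).continuousAt))).continuousWithinAt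
      have hintmid : IntervalIntegrable (fun t => Real.sqrt (E - V t)) volume z a := by
        have huIcc : Set.uIcc z a = Set.Icc z a := Set.uIcc_of_le hzlt.le
        exact (huIcc ▸ hcmid).intervalIntegrable
      have hclow : Continuous fun t : ℝ => Real.sqrt (c - ε) * Real.sqrt ((a - t) ^ n) := by
        fun_prop
      have hcup : Continuous fun t : ℝ => Real.sqrt (c + ε) * Real.sqrt ((a - t) ^ n) := by
        fun_prop
      have hJ : ∫ t in z..a, Real.sqrt ((a - t) ^ n)
          = 2 / ((n:ℝ) + 2) * Real.sqrt (s ^ (n + 2)) := by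
        calc ∫ t in z..a, Real.sqrt ((a - t) ^ n)
            = ∫ u in a - a..a - z, Real.sqrt (u ^ n) :=
              intervalIntegral.integral_comp_sub_left (fun u => Real.sqrt (u ^ n)) a
          _ = ∫ u in (0:ℝ)..s, Real.sqrt (u ^ n) := by rw [sub_self, hsdef]
          _ = 2 / ((n:ℝ) + 2) * Real.sqrt (s ^ (n + 2)) := sqrt_pow_integral n hs.le
      have hm1 : ∫ t in z..a, Real.sqrt (c - ε) * Real.sqrt ((a - t) ^ n)
          ≤ ∫ t in z..a, Real.sqrt (E - V t) :=
        intervalIntegral.integral_mono_on hzlt.le (hclow.intervalIntegrable z a) hintmid hlow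
      have hm2 : ∫ t in z..a, Real.sqrt (E - V t)
          ≤ ∫ t in z..a, Real.sqrt (c + ε) * Real.sqrt ((a - t) ^ n) :=
        intervalIntegral.integral_mono_on hzlt.le hintmid (hcup.intervalIntegrable z a) hup
      rw [intervalIntegral.integral_const_mul, hJ] at hm1 hm2
      set Iv := ∫ t in z..a, Real.sqrt (E - V t) with hIvdef
      have hΦz : Φ z = -((3/2 * Iv) ^ ((2:ℝ)/3)) := by
        rw [hΦdef]
        show (if z ≤ a then _ else _) = _
        rw [if_pos hzlt.le]
      have hslope : slope Φ a z = (3/2 * Iv) ^ ((2:ℝ)/3) / s := by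
        rw [slope_def_field, hΦz, hΦa, sub_zero, show z - a = -s by rw [hsdef]; ring,
          div_neg, neg_div, neg_neg]
      refine tail z s Iv hs habs hslope ?_ ?_
      · calc 3/((n:ℝ)+2) * Real.sqrt (c-ε) * Real.sqrt (s^(n+2))
            = 3/2 * (Real.sqrt (c-ε) * (2 / ((n:ℝ) + 2) * Real.sqrt (s ^ (n + 2)))) := by
              field_simp
          _ ≤ 3/2 * Iv := by linarith
      · calc (3:ℝ)/2 * Iv
            ≤ 3/2 * (Real.sqrt (c+ε) * (2 / ((n:ℝ) + 2) * Real.sqrt (s ^ (n + 2)))) := by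
              linarith
          _ = 3/((n:ℝ)+2) * Real.sqrt (c+ε) * Real.sqrt (s^(n+2)) := by field_simp
    · -- a < z
      set s := z - a with hsdef
      have hs : 0 < s := sub_pos.mpr hzgt
      have habs : |z - a| = s := abs_of_pos hs
      have hPt : ∀ t ∈ Set.Icc a z, (V t - E = (t - a) ^ n * g t) ∧ ((c - ε < g t ∧ g t < c + ε)
          ∧ t ∈ Set.Ioo (-δ) δ) := by
        intro t ht
        apply hP
        rw [Real.dist_eq, abs_of_nonneg (by linarith [ht.1] : (0:ℝ) ≤ t - a)]
        calc t - a ≤ s := by simp only [hsdef]; linarith [ht.2]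
          _ = |z - a| := habs.symm
          _ < r := hzr
      have hlow : ∀ t ∈ Set.Icc a z,
          Real.sqrt (c - ε) * Real.sqrt ((t - a) ^ n) ≤ Real.sqrt (V t - E) := by
        intro t ht
        obtain ⟨h1, ⟨h2, _⟩, _⟩ := hPt t ht
        rw [← Real.sqrt_mul (by linarith : (0:ℝ) ≤ c - ε)]
        apply Real.sqrt_le_sqrt
        rw [h1]
        nlinarith [pow_nonneg (by linarith [ht.1] : (0:ℝ) ≤ t - a) n]
      have hup : ∀ t ∈ Set.Icc a z,
          Real.sqrt (V t - E) ≤ Real.sqrt (c + ε) * Real.sqrt ((t - a) ^ n) := by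
        intro t ht
        obtain ⟨h1, ⟨_, h2⟩, _⟩ := hPt t ht
        rw [← Real.sqrt_mul (by linarith : (0:ℝ) ≤ c + ε)]
        apply Real.sqrt_le_sqrt
        rw [h1]
        nlinarith [pow_nonneg (by linarith [ht.1] : (0:ℝ) ≤ t - a) n]
      have hcmid : ContinuousOn (fun t => Real.sqrt (V t - E)) (Set.Icc a z) := by
        intro t ht
        exact (Real.continuous_sqrt.continuousAt.comp
          (((hV t (hPt t ht).2.2).continuousAt).sub continuousAt_const)).continuousWithinAt
      have hintmid : IntervalIntegrable (fun t => Real.sqrt (V t - E)) volume a z := by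
        have huIcc : Set.uIcc a z = Set.Icc a z := Set.uIcc_of_le hzgt.le
        exact (huIcc ▸ hcmid).intervalIntegrable
      have hclow : Continuous fun t : ℝ => Real.sqrt (c - ε) * Real.sqrt ((t - a) ^ n) := by
        fun_prop
      have hcup : Continuous fun t : ℝ => Real.sqrt (c + ε) * Real.sqrt ((t - a) ^ n) := by
        fun_prop
      have hJ : ∫ t in a..z, Real.sqrt ((t - a) ^ n)
          = 2 / ((n:ℝ) + 2) * Real.sqrt (s ^ (n + 2)) := by
        calc ∫ t in a..z, Real.sqrt ((t - a) ^ n)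
            = ∫ u in a - a..z - a, Real.sqrt (u ^ n) :=
              intervalIntegral.integral_comp_sub_right (fun u => Real.sqrt (u ^ n)) a
          _ = ∫ u in (0:ℝ)..s, Real.sqrt (u ^ n) := by rw [sub_self, hsdef]
          _ = 2 / ((n:ℝ) + 2) * Real.sqrt (s ^ (n + 2)) := sqrt_pow_integral n hs.le
      have hm1 : ∫ t in a..z, Real.sqrt (c - ε) * Real.sqrt ((t - a) ^ n)
          ≤ ∫ t in a..z, Real.sqrt (V t - E) :=
        intervalIntegral.integral_mono_on hzgt.le (hclow.intervalIntegrable a z) hintmid hlow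
      have hm2 : ∫ t in a..z, Real.sqrt (V t - E)
          ≤ ∫ t in a..z, Real.sqrt (c + ε) * Real.sqrt ((t - a) ^ n) :=
        intervalIntegral.integral_mono_on hzgt.le hintmid (hcup.intervalIntegrable a z) hup
      rw [intervalIntegral.integral_const_mul, hJ] at hm1 hm2
      set Iv := ∫ t in a..z, Real.sqrt (V t - E) with hIvdef
      have hΦz : Φ z = (3/2 * Iv) ^ ((2:ℝ)/3) := by
        rw [hΦdef]
        show (if z ≤ a then _ else _) = _
        rw [if_neg (not_le.mpr hzgt)]
      have hslope : slope Φ a z = (3/2 * Iv) ^ ((2:ℝ)/3) / s := by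
        rw [slope_def_field, hΦz, hΦa, sub_zero, hsdef]
      refine tail z s Iv hs habs hslope ?_ ?_
      · calc 3/((n:ℝ)+2) * Real.sqrt (c-ε) * Real.sqrt (s^(n+2))
            = 3/2 * (Real.sqrt (c-ε) * (2 / ((n:ℝ) + 2) * Real.sqrt (s ^ (n + 2)))) := by
              field_simp
          _ ≤ 3/2 * Iv := by linarith
      · calc (3:ℝ)/2 * Iv
            ≤ 3/2 * (Real.sqrt (c+ε) * (2 / ((n:ℝ) + 2) * Real.sqrt (s ^ (n + 2)))) := by
              linarith
          _ = 3/((n:ℝ)+2) * Real.sqrt (c+ε) * Real.sqrt (s^(n+2)) := by field_simp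
  -- conclude the derivative at a
  have hΦd : HasDerivAt Φ (if n = 1 then c ^ ((1:ℝ)/3) else 0) a := by
    rw [hasDerivAt_iff_tendsto_slope, Metric.tendsto_nhds]
    intro ε' hε'
    have hmemr : ∀ r : ℝ, 0 < r → ∀ᶠ z in nhdsWithin a {a}ᶜ, |z - a| < r ∧ z ≠ a := by
      intro r hr
      have h1 : ∀ᶠ z in nhds a, |z - a| < r := by
        have : ∀ᶠ z in nhds a, dist z a < r := by
          filter_upwards [Metric.ball_mem_nhds a hr] with z hz using hz
        filter_upwards [this] with z hz
        rwa [Real.dist_eq] at hz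
      filter_upwards [h1.filter_mono nhdsWithin_le_nhds, self_mem_nhdsWithin] with z h2 h3
      exact ⟨h2, h3⟩
    by_cases h1 : n = 1
    · -- simple zero : limit c^{1/3}
      subst h1
      have hsqrt13 : ∀ y : ℝ, 0 ≤ y → (Real.sqrt y) ^ ((2:ℝ)/3) = y ^ ((1:ℝ)/3) := by
        intro y hy
        rw [Real.sqrt_eq_rpow, ← Real.rpow_mul hy]
        norm_num
      have hcont3 : ContinuousAt (fun y : ℝ => y ^ ((1:ℝ)/3)) c :=
        Real.continuousAt_rpow_const c _ (Or.inl (ne_of_gt hgapos))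
      obtain ⟨η, hη, hη'⟩ := Metric.continuousAt_iff.mp hcont3 ε' hε'
      set ε := min (η/2) (c/2) with hεdef
      have hεpos : 0 < ε := lt_min (by linarith) (by linarith)
      have hεc : ε < c := lt_of_le_of_lt (min_le_right _ _) (by linarith)
      obtain ⟨r, hr, hkey⟩ := key ε hεpos hεc
      filter_upwards [hmemr r hr] with z hz
      obtain ⟨hl, hu⟩ := hkey z hz.2 hz.1
      norm_num at hl hu
      rw [hsqrt13 _ (by linarith)] at hl
      rw [hsqrt13 _ (by linarith)] at hu
      have hεη : ε < η := lt_of_le_of_lt (min_le_left _ _) (by linarith)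
      have k1 := hη' (show dist (c - ε) c < η by
        rw [Real.dist_eq, abs_of_nonpos (by linarith)]; simp; linarith)
      have k2 := hη' (show dist (c + ε) c < η by
        rw [Real.dist_eq, abs_of_nonneg (by linarith)]; linarith)
      rw [Real.dist_eq, abs_lt] at k1 k2
      rw [if_pos rfl, Real.dist_eq, abs_lt]
      constructor
      · linarith [k1.1]
      · linarith [k2.2]
    · have hn3 : 3 ≤ n := by
        rcases hodd with ⟨k, hk⟩
        omega
      obtain ⟨r, hr, hkey⟩ := key (c/2) (by linarith) (by linarith)
      set C := (3/((n:ℝ)+2) * Real.sqrt (c + c/2)) ^ ((2:ℝ)/3) with hC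
      have hC0 : 0 ≤ C := Real.rpow_nonneg (by positivity) _
      have htz : Filter.Tendsto (fun w : ℝ => C * |w - a| ^ ((2:ℝ)/3)) (nhds a) (nhds 0) := by
        have habs : Filter.Tendsto (fun w : ℝ => |w - a|) (nhds a) (nhds 0) := by
          have hcont : Continuous fun w : ℝ => |w - a| := by fun_prop
          have h0 : |a - a| = (0:ℝ) := by simp
          simpa [h0] using hcont.tendsto a
        have hrc : ContinuousAt (fun y : ℝ => y ^ ((2:ℝ)/3)) 0 :=
          Real.continuousAt_rpow_const 0 _ (Or.inr (by norm_num))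
        have h2 := (hrc.tendsto.comp habs).const_mul C
        simpa [Real.zero_rpow, (by norm_num : ((2:ℝ)/3) ≠ 0)] using h2
      have hsm : ∀ᶠ z in nhds a, C * |z - a| ^ ((2:ℝ)/3) < ε' :=
        htz.eventually_lt_const hε'
      filter_upwards [hmemr (min r 1) (by positivity), hsm.filter_mono nhdsWithin_le_nhds]
        with z hz hz2
      obtain ⟨hl, hu⟩ := hkey z hz.2 (lt_of_lt_of_le hz.1 (min_le_left _ _))
      have hzabs : 0 < |z - a| := abs_pos.mpr (sub_ne_zero.mpr hz.2)
      have hz1 : |z - a| ≤ 1 := le_of_lt (lt_of_lt_of_le hz.1 (min_le_right _ _))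
      have hexp : |z - a| ^ (((n:ℝ)+2)/3 - 1) ≤ |z - a| ^ ((2:ℝ)/3) := by
        apply Real.rpow_le_rpow_of_exponent_ge hzabs hz1
        have hcast : (3:ℝ) ≤ (n:ℝ) := by exact_mod_cast hn3
        linarith
      have hup2 : slope Φ a z ≤ C * |z - a| ^ ((2:ℝ)/3) := by
        calc slope Φ a z
            ≤ (3/((n:ℝ)+2) * Real.sqrt (c + c/2)) ^ ((2:ℝ)/3) * |z-a| ^ (((n:ℝ)+2)/3 - 1) := hu
          _ ≤ C * |z - a| ^ ((2:ℝ)/3) := by rw [hC]; exact mul_le_mul_of_nonneg_left hexp hC0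
      have hlow0 : 0 ≤ slope Φ a z := le_trans (by positivity) hl
      rw [if_neg h1, Real.dist_eq, sub_zero, abs_of_nonneg hlow0]
      exact lt_of_le_of_lt hup2 hz2
  exact hΦd.differentiableAt

/-- With `V` real-analytic near `0`, `V(0)=0`, `V'(0)>0`, `E` real
near `0` and `a = a(E)` the root of `V = E` near `0`, the function
`ξ(x) = -((3/2)∫_x^a √(E-V(t)) dt)^{2/3}` for `x ≤ a`,
`ξ(x) = ((3/2)∫_a^x √(V(t)-E) dt)^{2/3}` for `x > a`,
is differentiable near `0` and satisfies `ξ(x)·ξ'(x)² = V(x) − E`. -/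
theorem xi_equation (V : ℝ → ℝ) (E a δ : ℝ) (hδ : 0 < δ)
    (hV : ∀ x ∈ Set.Ioo (-δ) δ, AnalyticAt ℝ V x)
    (hV0 : V 0 = 0) (hV' : 0 < deriv V 0)
    (ha : a ∈ Set.Ioo (-δ) δ) (haE : V a = E)
    (hleft : ∀ t ∈ Set.Ioo (-δ) δ, t < a → V t < E)
    (hright : ∀ t ∈ Set.Ioo (-δ) δ, a < t → E < V t) :
    ∀ x ∈ Set.Ioo (-δ) δ,
      DifferentiableAt ℝ
        (fun x : ℝ =>
          if x ≤ a then
            -((3 / 2 * ∫ t in x..a, Real.sqrt (E - V t)) ^ ((2 : ℝ) / 3))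
          else (3 / 2 * ∫ t in a..x, Real.sqrt (V t - E)) ^ ((2 : ℝ) / 3)) x ∧
      (fun x : ℝ =>
          if x ≤ a then
            -((3 / 2 * ∫ t in x..a, Real.sqrt (E - V t)) ^ ((2 : ℝ) / 3))
          else (3 / 2 * ∫ t in a..x, Real.sqrt (V t - E)) ^ ((2 : ℝ) / 3)) x *
        (deriv (fun x : ℝ =>
          if x ≤ a then
            -((3 / 2 * ∫ t in x..a, Real.sqrt (E - V t)) ^ ((2 : ℝ) / 3))
          else (3 / 2 * ∫ t in a..x, Real.sqrt (V t - E)) ^ ((2 : ℝ) / 3)) x) ^ 2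
        = V x - E := by
  set Φ : ℝ → ℝ := fun x : ℝ =>
      if x ≤ a then
        -((3 / 2 * ∫ t in x..a, Real.sqrt (E - V t)) ^ ((2 : ℝ) / 3))
      else (3 / 2 * ∫ t in a..x, Real.sqrt (V t - E)) ^ ((2 : ℝ) / 3) with hΦdef
  have hconta : ∀ y ∈ Set.Ioo (-δ) δ, ContinuousAt V y := fun y hy => (hV y hy).continuousAt
  intro x hx
  rcases lt_trichotomy x a with h | h | h
  · -- x < a
    have hcf : ∀ y ∈ Set.Ioo (-δ) δ, ContinuousAt (fun t => Real.sqrt (E - V t)) y :=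
      fun y hy => Real.continuous_sqrt.continuousAt.comp (continuousAt_const.sub (hconta y hy))
    have hcOn : ContinuousOn (fun t => Real.sqrt (E - V t)) (Set.Ioo (-δ) δ) :=
      fun y hy => (hcf y hy).continuousWithinAt
    have hsub : Set.uIcc a x ⊆ Set.Ioo (-δ) δ := Set.ordConnected_Ioo.uIcc_subset ha hx
    have hint : IntervalIntegrable (fun t => Real.sqrt (E - V t)) volume a x :=
      (hcOn.mono hsub).intervalIntegrable
    have hmeas : StronglyMeasurableAtFilter (fun t => Real.sqrt (E - V t)) (nhds x) volume :=
      hcOn.stronglyMeasurableAtFilter isOpen_Ioo x hx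
    have hI : HasDerivAt (fun u => ∫ t in a..u, Real.sqrt (E - V t))
        (Real.sqrt (E - V x)) x :=
      intervalIntegral.integral_hasDerivAt_right hint hmeas (hcf x hx)
    have hIx : HasDerivAt (fun u => ∫ t in u..a, Real.sqrt (E - V t))
        (-Real.sqrt (E - V x)) x := by
      have := hI.neg
      refine this.congr_of_eventuallyEq (Filter.Eventually.of_forall fun u => ?_)
      exact intervalIntegral.integral_symm a u
    have hB : HasDerivAt (fun u => 3 / 2 * ∫ t in u..a, Real.sqrt (E - V t))
        (3 / 2 * -Real.sqrt (E - V x)) x := hIx.const_mul (3 / 2)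
    set B : ℝ := 3 / 2 * ∫ t in x..a, Real.sqrt (E - V t) with hBdef
    have hBpos : 0 < B := by
      have hpos : 0 < ∫ t in x..a, Real.sqrt (E - V t) := by
        apply intervalIntegral.intervalIntegral_pos_of_pos_on
        · exact ((hcOn.mono (Set.ordConnected_Ioo.uIcc_subset hx ha)).intervalIntegrable)
        · intro t ht
          have htI : t ∈ Set.Ioo (-δ) δ := ⟨lt_trans hx.1 ht.1, lt_trans ht.2 ha.2⟩
          exact Real.sqrt_pos.mpr (sub_pos.mpr (hleft t htI ht.2))
        · exact h
      linarith
    have hG : HasDerivAt (fun u => (3 / 2 * ∫ t in u..a, Real.sqrt (E - V t)) ^ ((2 : ℝ) / 3))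
        ((3 / 2 * -Real.sqrt (E - V x)) * ((2 : ℝ) / 3) * B ^ ((2 : ℝ) / 3 - 1)) x := by
      have := hB.rpow_const (p := (2 : ℝ) / 3) (Or.inl hBpos.ne')
      simpa [hBdef] using this
    have hev : (fun u => -((3 / 2 * ∫ t in u..a, Real.sqrt (E - V t)) ^ ((2 : ℝ) / 3)))
        =ᶠ[nhds x] Φ := by
      filter_upwards [Iio_mem_nhds h] with u hu
      exact (if_pos (le_of_lt (Set.mem_Iio.mp hu))).symm
    have hΦd : HasDerivAt Φ
        (-((3 / 2 * -Real.sqrt (E - V x)) * ((2 : ℝ) / 3) * B ^ ((2 : ℝ) / 3 - 1))) x :=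
      (hG.neg).congr_of_eventuallyEq hev.symm
    refine ⟨hΦd.differentiableAt, ?_⟩
    rw [hΦd.deriv]
    have hΦx : Φ x = -(B ^ ((2 : ℝ) / 3)) := by simp [hΦdef, le_of_lt h, hBdef]
    have hS : Real.sqrt (E - V x) ^ 2 = E - V x :=
      Real.sq_sqrt (by linarith [hleft x hx h])
    have hpq : B ^ ((2 : ℝ) / 3) * (B ^ ((2 : ℝ) / 3 - 1) * B ^ ((2 : ℝ) / 3 - 1)) = 1 := by
      rw [← Real.rpow_add hBpos, ← Real.rpow_add hBpos]
      norm_num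
    show Φ x * _ = _
    rw [hΦx]
    set p := B ^ ((2 : ℝ) / 3 - 1)
    set q := B ^ ((2 : ℝ) / 3)
    set S := Real.sqrt (E - V x)
    calc -q * (-(3 / 2 * -S * ((2:ℝ) / 3) * p)) ^ 2
        = -(q * (p * p)) * S ^ 2 := by ring
      _ = V x - E := by rw [hpq, hS]; ring
  · -- x = a
    subst h
    refine ⟨xi_diff_at_a V E x δ hδ hV hx haE hleft hright, ?_⟩
    have hΦa : Φ x = 0 := by
      rw [hΦdef]
      show (if x ≤ x then _ else _) = (0:ℝ)
      rw [if_pos le_rfl, intervalIntegral.integral_same, mul_zero,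
        Real.zero_rpow (by norm_num), neg_zero]
    show Φ x * _ = _
    rw [hΦa, zero_mul, haE, sub_self]
  · -- x > a
    have hcf : ∀ y ∈ Set.Ioo (-δ) δ, ContinuousAt (fun t => Real.sqrt (V t - E)) y :=
      fun y hy => Real.continuous_sqrt.continuousAt.comp ((hconta y hy).sub continuousAt_const)
    have hcOn : ContinuousOn (fun t => Real.sqrt (V t - E)) (Set.Ioo (-δ) δ) :=
      fun y hy => (hcf y hy).continuousWithinAt
    have hsub : Set.uIcc a x ⊆ Set.Ioo (-δ) δ := Set.ordConnected_Ioo.uIcc_subset ha hx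
    have hint : IntervalIntegrable (fun t => Real.sqrt (V t - E)) volume a x :=
      (hcOn.mono hsub).intervalIntegrable
    have hmeas : StronglyMeasurableAtFilter (fun t => Real.sqrt (V t - E)) (nhds x) volume :=
      hcOn.stronglyMeasurableAtFilter isOpen_Ioo x hx
    have hI : HasDerivAt (fun u => ∫ t in a..u, Real.sqrt (V t - E))
        (Real.sqrt (V x - E)) x :=
      intervalIntegral.integral_hasDerivAt_right hint hmeas (hcf x hx)
    have hB : HasDerivAt (fun u => 3 / 2 * ∫ t in a..u, Real.sqrt (V t - E))
        (3 / 2 * Real.sqrt (V x - E)) x := hI.const_mul (3 / 2)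
    set B : ℝ := 3 / 2 * ∫ t in a..x, Real.sqrt (V t - E) with hBdef
    have hBpos : 0 < B := by
      have hpos : 0 < ∫ t in a..x, Real.sqrt (V t - E) := by
        apply intervalIntegral.intervalIntegral_pos_of_pos_on
        · exact hint
        · intro t ht
          have htI : t ∈ Set.Ioo (-δ) δ := ⟨lt_trans ha.1 ht.1, lt_trans ht.2 hx.2⟩
          exact Real.sqrt_pos.mpr (sub_pos.mpr (hright t htI ht.1))
        · exact h
      linarith
    have hG : HasDerivAt (fun u => (3 / 2 * ∫ t in a..u, Real.sqrt (V t - E)) ^ ((2 : ℝ) / 3))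
        ((3 / 2 * Real.sqrt (V x - E)) * ((2 : ℝ) / 3) * B ^ ((2 : ℝ) / 3 - 1)) x := by
      have := hB.rpow_const (p := (2 : ℝ) / 3) (Or.inl hBpos.ne')
      simpa [hBdef] using this
    have hev : (fun u => (3 / 2 * ∫ t in a..u, Real.sqrt (V t - E)) ^ ((2 : ℝ) / 3))
        =ᶠ[nhds x] Φ := by
      filter_upwards [Ioi_mem_nhds h] with u hu
      exact (if_neg (not_le.mpr (Set.mem_Ioi.mp hu))).symm
    have hΦd : HasDerivAt Φ
        ((3 / 2 * Real.sqrt (V x - E)) * ((2 : ℝ) / 3) * B ^ ((2 : ℝ) / 3 - 1)) x :=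
      hG.congr_of_eventuallyEq hev.symm
    refine ⟨hΦd.differentiableAt, ?_⟩
    rw [hΦd.deriv]
    have hΦx : Φ x = B ^ ((2 : ℝ) / 3) := by simp [hΦdef, not_le.mpr h, hBdef]
    have hS : Real.sqrt (V x - E) ^ 2 = V x - E :=
      Real.sq_sqrt (by linarith [hright x hx h])
    have hpq : B ^ ((2 : ℝ) / 3) * (B ^ ((2 : ℝ) / 3 - 1) * B ^ ((2 : ℝ) / 3 - 1)) = 1 := by
      rw [← Real.rpow_add hBpos, ← Real.rpow_add hBpos]
      norm_num
    show Φ x * _ = _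
    rw [hΦx]
    set p := B ^ ((2 : ℝ) / 3 - 1)
    set q := B ^ ((2 : ℝ) / 3)
    set S := Real.sqrt (V x - E)
    calc q * (3 / 2 * S * ((2:ℝ) / 3) * p) ^ 2
        = q * (p * p) * S ^ 2 := by ring
      _ = V x - E := by rw [hpq, hS]; ring
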